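/- For a noetherian commutative ring with a dualizing complex, Hom(I, J) is a bounded complex of flat modules whenever I is a bounded complex of injectives and J is an injective module. -/

import Mathlib

open CategoryTheory CategoryTheory.Limits CochainComplex.HomComplex

variable {A : Type} [CommRing A]

/-- Cochain complexes of A-modules. -/
abbrev Cplx (A : Type) [Ring A] := CochainComplex (ModuleCat A) ℤ

/-- A complex is acyclic (exact) if it is exact at every degree. -/
def Acyclic (C : Cplx A) : Prop := ∀ n : ℤ, C.ExactAt n

/-- A module viewed as a complex concentrated in degree 0. -/
noncomputable def sgl (Q : ModuleCat A) : Cplx A :=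
  (HomologicalComplex.single (ModuleCat A) (ComplexShape.up ℤ) 0).obj Q

/-- Acyclicity of the total Hom-complex Hom(P, Q): every n-cocycle is a coboundary. -/
def HomAcyclic (P Q : Cplx A) : Prop :=
  ∀ (n : ℤ) (z : Cocycle P Q n), ∃ y : Cochain P Q (n - 1), δ (n - 1) n y = z.1

/-- A complex is bounded if its terms vanish outside a finite range. -/
def Bdd (C : Cplx A) : Prop := ∃ a b : ℤ, ∀ n : ℤ, (n < a ∨ b < n) → IsZero (C.X n)

/-- A Gorenstein projective module: a kernel Ker(E^1 → E^2) of a totally acyclic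
complex of projectives. -/
def IsGorensteinProjective (G : ModuleCat A) : Prop :=
  ∃ E : Cplx A, (∀ n : ℤ, Projective (E.X n)) ∧ Acyclic E ∧
    (∀ Q : ModuleCat A, Projective Q → HomAcyclic E (sgl Q)) ∧
    Nonempty (G ≅ kernel (E.d 1 2))

section Aux
open TensorProduct

universe u
variable {A : Type} [CommRing A] {M : Type u} [AddCommGroup M] [Module A M]
  {J : Type} [AddCommGroup J] [Module A J]

noncomputable def theta (N : Type*) [AddCommGroup N] [Module A N] :
    N ⊗[A] (M →ₗ[A] J) →ₗ[A] ((N →ₗ[A] M) →ₗ[A] J) :=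
  TensorProduct.lift (LinearMap.mk₂ A (fun n f => f ∘ₗ LinearMap.applyₗ n)
    (by intros; ext; simp) (by intros; ext; simp)
    (by intros; ext; simp) (by intros; ext; simp))

@[simp] lemma theta_tmul (N : Type*) [AddCommGroup N] [Module A N]
    (n : N) (f : M →ₗ[A] J) (g : N →ₗ[A] M) :
    theta N (n ⊗ₜ f) g = f (g n) := rfl

lemma theta_natural {N N' : Type*} [AddCommGroup N] [Module A N]
    [AddCommGroup N'] [Module A N'] (ψ : N →ₗ[A] N')
    (t : N ⊗[A] (M →ₗ[A] J)) (g : N' →ₗ[A] M) :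
    theta N' (LinearMap.rTensor _ ψ t) g = theta N t (g ∘ₗ ψ) := by
  induction t with
  | zero => simp
  | tmul n f => simp
  | add x y hx hy => simp [hx, hy]

lemma single_eq_smul {k : ℕ} (i : Fin k) (a : A) :
    (Pi.single i a : Fin k → A) = a • (Pi.single i (1:A) : Fin k → A) := by
  funext j
  simp [Pi.single_apply, mul_ite]

lemma exists_repr {k : ℕ} (t : (Fin k → A) ⊗[A] (M →ₗ[A] J)) :
    ∃ f : Fin k → (M →ₗ[A] J), t = ∑ i, Pi.single i (1:A) ⊗ₜ[A] f i := by
  induction t with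
  | zero => exact ⟨0, by simp⟩
  | tmul v h =>
    refine ⟨fun i => v i • h, ?_⟩
    have : ∀ i : Fin k, Pi.single i (1:A) ⊗ₜ[A] (v i • h)
        = ((Pi.single i (v i) : Fin k → A)) ⊗ₜ[A] h := by
      intro i
      rw [← TensorProduct.smul_tmul, ← single_eq_smul]
    rw [Finset.sum_congr rfl (fun i _ => this i), ← TensorProduct.sum_tmul,
      Finset.univ_sum_single]
  | add x y hx hy =>
    obtain ⟨f, rfl⟩ := hx
    obtain ⟨g, rfl⟩ := hy
    exact ⟨f + g, by simp [TensorProduct.tmul_add, Finset.sum_add_distrib]⟩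

lemma theta_pi_inj (k : ℕ) :
    Function.Injective (theta (A := A) (M := M) (J := J) (Fin k → A)) := by
  rw [← LinearMap.ker_eq_bot, LinearMap.ker_eq_bot']
  intro t ht
  obtain ⟨f, rfl⟩ := exists_repr t
  have hf : ∀ i, f i = 0 := by
    intro i
    ext m
    have := congrArg (fun Φ => Φ ((LinearMap.proj i).smulRight m)) ht
    simp only [map_sum, LinearMap.sum_apply, theta_tmul, LinearMap.zero_apply] at this
    rw [Finset.sum_eq_single i] at this
    · simpa using this
    · intro j _ hj
      simp [Pi.single_eq_of_ne (Ne.symm hj)]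
    · simp
  simp [hf]

/-- `m ↦ (v ↦ v i • m)` as a linear map. -/
noncomputable def gsm {k : ℕ} (i : Fin k) : M →ₗ[A] ((Fin k → A) →ₗ[A] M) where
  toFun m := (LinearMap.proj i).smulRight m
  map_add' m m' := by refine LinearMap.ext fun v => ?_; simp [smul_add]
  map_smul' a m := by
    refine LinearMap.ext fun v => ?_
    simp only [LinearMap.smulRight_apply, LinearMap.proj_apply, RingHom.id_apply,
      LinearMap.smul_apply]
    rw [smul_comm]

lemma theta_pi_surj (k : ℕ) :
    Function.Surjective (theta (A := A) (M := M) (J := J) (Fin k → A)) := by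
  intro Φ
  refine ⟨∑ i, Pi.single i (1:A) ⊗ₜ[A] (Φ ∘ₗ gsm i), ?_⟩
  refine LinearMap.ext fun g => ?_
  simp only [map_sum, LinearMap.sum_apply, theta_tmul, LinearMap.comp_apply]
  rw [← map_sum]
  congr 1
  refine LinearMap.ext fun v => ?_
  simp only [LinearMap.sum_apply, gsm, LinearMap.coe_mk, AddHom.coe_mk,
    LinearMap.smulRight_apply, LinearMap.proj_apply]
  conv_rhs => rw [← Finset.univ_sum_single v, map_sum]
  refine Finset.sum_congr rfl fun i _ => ?_
  rw [single_eq_smul i (v i), map_smul]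
open Function in
lemma factor_through {R : Type} [CommRing R] {X Y Z : Type*}
    [AddCommGroup X] [Module R X] [AddCommGroup Y] [Module R Y]
    [AddCommGroup Z] [Module R Z]
    (p : X →ₗ[R] Y) (hp : Function.Surjective p) (h : X →ₗ[R] Z)
    (hker : ∀ x, p x = 0 → h x = 0) : ∃ g : Y →ₗ[R] Z, g ∘ₗ p = h := by
  have key : ∀ u v : X, p u = p v → h u = h v := by
    intro u v huv
    have h1 : p (u - v) = 0 := by rw [map_sub, huv, sub_self]
    have := hker _ h1
    rw [map_sub, sub_eq_zero] at this
    exact this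
  refine ⟨{ toFun := fun y => h (surjInv hp y), map_add' := ?_, map_smul' := ?_ }, ?_⟩
  · intro a b
    rw [← map_add]
    exact key _ _ (by rw [surjInv_eq hp, map_add, surjInv_eq hp, surjInv_eq hp])
  · intro r a
    simp only [RingHom.id_apply]
    rw [← map_smul]
    exact key _ _ (by rw [surjInv_eq hp, map_smul, surjInv_eq hp])
  · refine LinearMap.ext fun x => ?_
    exact key _ _ (surjInv_eq hp (p x))

theorem flat_hom_of_injective {A : Type} [CommRing A] [IsNoetherianRing A]
    {M : Type u} [AddCommGroup M] [Module A M] {J : Type} [AddCommGroup J] [Module A J]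
    (hM : Module.Injective A M) (hJ : Module.Injective A J) :
    Module.Flat A (M →ₗ[A] J) := by
  haveI := hM
  haveI := hJ
  rw [Module.Flat.iff_rTensor_injective' (R := A) (M := M →ₗ[A] J)]
  intro 𝔞
  rw [← LinearMap.ker_eq_bot, LinearMap.ker_eq_bot']
  intro x hx
  -- Step 1: θ_𝔞 x = 0
  have h0 : theta (A := A) (M := M) (J := J) (↥𝔞) x = 0 := by
    refine LinearMap.ext fun g => ?_
    obtain ⟨G, hG⟩ := Module.Injective.extension_property A M (↥𝔞) A
      𝔞.subtype 𝔞.injective_subtype g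
    have hnat := theta_natural (𝔞.subtype) x G
    rw [hx, map_zero, LinearMap.zero_apply, hG] at hnat
    rw [LinearMap.zero_apply, ← hnat]
  -- Step 2: presentation of 𝔞
  haveI : Module.Finite A ↥𝔞 := Module.Finite.iff_fg.mpr (IsNoetherian.noetherian 𝔞)
  obtain ⟨n, π, hπ⟩ := Module.Finite.exists_fin' A ↥𝔞
  haveI : Module.Finite A ↥(LinearMap.ker π) :=
    Module.Finite.iff_fg.mpr (IsNoetherian.noetherian (LinearMap.ker π))
  obtain ⟨m, p, hp⟩ := Module.Finite.exists_fin' A ↥(LinearMap.ker π)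
  set φ : (Fin m → A) →ₗ[A] (Fin n → A) := (LinearMap.ker π).subtype ∘ₗ p with hφ
  have hrange : LinearMap.range φ = LinearMap.ker π := by
    rw [hφ, LinearMap.range_comp, LinearMap.range_eq_top.mpr hp, Submodule.map_top,
      Submodule.range_subtype]
  obtain ⟨y, rfl⟩ := LinearMap.rTensor_surjective (M →ₗ[A] J) hπ x
  -- Step 3: Ψ := θ_{Fn} y vanishes on maps killed by precomposition with φ
  have step3 : ∀ h : (Fin n → A) →ₗ[A] M, h ∘ₗ φ = 0 →
      theta (A := A) (M := M) (J := J) (Fin n → A) y h = 0 := by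
    intro h hh
    have hker' : ∀ v, π v = 0 → h v = 0 := by
      intro v hv
      have : v ∈ LinearMap.range φ := hrange.symm ▸ LinearMap.mem_ker.mpr hv
      obtain ⟨w, rfl⟩ := this
      exact congrFun (congrArg (fun (l : (Fin m → A) →ₗ[A] M) => l.toFun) hh) w
    obtain ⟨g, hg⟩ := factor_through π hπ h hker'
    rw [← hg, ← theta_natural, h0, LinearMap.zero_apply]
  -- Step 4: factor Ψ through precomposition with φ
  have step4 : ∃ ψ : ((Fin m → A) →ₗ[A] M) →ₗ[A] J,
      ∀ h : (Fin n → A) →ₗ[A] M,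
        ψ (h ∘ₗ φ) = theta (A := A) (M := M) (J := J) (Fin n → A) y h := by
    set ρ : ((Fin n → A) →ₗ[A] M) →ₗ[A] ((Fin m → A) →ₗ[A] M) := LinearMap.lcomp A M φ
    set ρ' : ((Fin n → A) →ₗ[A] M) →ₗ[A] ↥(LinearMap.range ρ) := ρ.rangeRestrict
    obtain ⟨ψ₀, hψ₀⟩ := factor_through ρ' ρ.surjective_rangeRestrict
      (theta (A := A) (M := M) (J := J) (Fin n → A) y)
      (by
        intro h hh
        apply step3
        have h2 : ρ h = 0 := by
          have h3 : ((LinearMap.range ρ).subtype) (ρ' h) = ρ h := rfl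
          rw [← h3, hh, map_zero]
        exact h2)
    obtain ⟨ψ, hψ⟩ := Module.Injective.extension_property A J
      (↥(LinearMap.range ρ)) ((Fin m → A) →ₗ[A] M)
      (LinearMap.range ρ).subtype (Submodule.injective_subtype _) ψ₀
    refine ⟨ψ, fun h => ?_⟩
    have h1 : (h ∘ₗ φ) = (LinearMap.range ρ).subtype (ρ' h) := rfl
    rw [h1, ← LinearMap.comp_apply, hψ, ← hψ₀, LinearMap.comp_apply]
  obtain ⟨ψ, hψ⟩ := step4
  -- Step 5
  obtain ⟨z, hz⟩ := theta_pi_surj (A := A) (M := M) (J := J) m ψ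
  have hyz : y = LinearMap.rTensor (M →ₗ[A] J) φ z := by
    apply theta_pi_inj (A := A) (M := M) (J := J) n
    refine LinearMap.ext fun h => ?_
    rw [theta_natural, hz, hψ]
  have hcomp : π ∘ₗ φ = 0 := by
    refine LinearMap.ext fun w => ?_
    have : φ w ∈ LinearMap.ker π := hrange ▸ LinearMap.mem_range_self φ w
    simpa using this
  rw [hyz, ← LinearMap.rTensor_comp_apply, hcomp]
  simp

end Aux

/-- Over a commutative noetherian ring, Hom(I, J) is a bounded complex of flat modules
whenever I is a bounded complex of injectives and J is an injective module. -/
theorem stmt_4 [IsNoetherianRing A] (I : Cplx A) (hI : ∀ n : ℤ, Injective (I.X n))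
    (hIb : Bdd I) (J : Type) [AddCommGroup J] [Module A J] (hJ : Module.Injective A J) :
    (∀ n : ℤ, Module.Flat A (I.X n →ₗ[A] J)) ∧
    (∃ a b : ℤ, ∀ n : ℤ, (n < a ∨ b < n) → Subsingleton (I.X n →ₗ[A] J)) := by
  constructor
  · intro n
    have hMinj : Module.Injective A ↥(I.X n) :=
      Module.injective_module_of_injective_object A ↥(I.X n) (inj := hI n)
    exact flat_hom_of_injective hMinj hJ
  · obtain ⟨a, b, h⟩ := hIb
    refine ⟨a, b, fun n hn => ?_⟩
    have hz : ∀ x : ↥(I.X n), x = 0 := by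
      intro x
      have h1 : 𝟙 (I.X n) = 0 := (h n hn).eq_of_src _ _
      calc x = (𝟙 (I.X n)) x := rfl
        _ = (0 : I.X n ⟶ I.X n) x := by rw [h1]
        _ = 0 := rfl
    exact ⟨fun f g => by ext x; rw [hz x, map_zero, map_zero]⟩
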